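/- arXiv:1205.4508 — 2 statements merged into one kernel-verified Lean document; each statement's English description precedes it below -/
import Mathlib

section
/- Suppose e^{-V} ∈ C_b^2(ℝ^d), condition (A1) holds, and Φ(0) > 0. Then there exists a constant C > 0 such that the Poincaré inequality μ_V(f^2) ≤ C·E_{α,V}(f,f) holds for every f ∈ D(E_{α,V}) with μ_V(f) = 0. -/
open MeasureTheory Real Filter Metric ENNReal

noncomputable section

/-- Euclidean space `ℝ^d`. -/
abbrev Euc (d : ℕ) := EuclideanSpace ℝ (Fin d)

/-- The normalizing constant `Z = ∫ e^{-V(x)} dx`. -/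
def ZV (d : ℕ) (V : Euc d → ℝ) : ℝ≥0∞ := ∫⁻ x, ENNReal.ofReal (Real.exp (-V x))

/-- The probability measure `μ_V(dx) = Z⁻¹ e^{-V(x)} dx`. -/
def muV (d : ℕ) (V : Euc d → ℝ) : Measure (Euc d) :=
  (ZV d V)⁻¹ • (volume.withDensity fun x => ENNReal.ofReal (Real.exp (-V x)))

/-- The stable-like Dirichlet form
`E_{α,V}(f,f) = ∫∫ |f(x)-f(y)|² / |x-y|^{d+α} dy μ_V(dx)`. -/
def dform (d : ℕ) (α : ℝ) (V : Euc d → ℝ) (f : Euc d → ℝ) : ℝ≥0∞ :=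
  ∫⁻ x, (∫⁻ y, ENNReal.ofReal ((f x - f y) ^ 2 / dist x y ^ ((d : ℝ) + α))) ∂(muV d V)

/-- Membership in the domain `D(E_{α,V}) = {f ∈ L²(μ_V) : E_{α,V}(f,f) < ∞}`. -/
def inDomain (d : ℕ) (α : ℝ) (V f : Euc d → ℝ) : Prop :=
  MemLp f 2 (muV d V) ∧ dform d α V f < ⊤

/-- The Poincaré inequality `μ_V(f²) ≤ C E_{α,V}(f,f)` for `f ∈ D(E_{α,V})` with `μ_V(f) = 0`. -/
def poincare (d : ℕ) (α : ℝ) (V : Euc d → ℝ) (C : ℝ) : Prop :=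
  ∀ f : Euc d → ℝ, inDomain d α V f → (∫ x, f x ∂(muV d V)) = 0 →
    (∫⁻ x, ENNReal.ofReal ((f x) ^ 2) ∂(muV d V)) ≤ ENNReal.ofReal C * dform d α V f

/-- `Φ(r) = inf_{|x| ≥ r} e^{V(x)} / (1+|x|)^{d+α}`. -/
def PhiV (d : ℕ) (α : ℝ) (V : Euc d → ℝ) (r : ℝ) : ℝ :=
  sInf ((fun x => Real.exp (V x) / (1 + ‖x‖) ^ ((d : ℝ) + α)) '' {x : Euc d | r ≤ ‖x‖})

/-- Generalized inverse `Φ⁻¹(s) = inf {t ≥ 0 : Φ(t) ≥ s}`. -/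
def PhiInv (d : ℕ) (α : ℝ) (V : Euc d → ℝ) (s : ℝ) : ℝ :=
  sInf {t : ℝ | 0 ≤ t ∧ s ≤ PhiV d α V t}

/-- `W ∈ C_b²(ℝ^d)`: twice continuously differentiable, bounded with bounded
first and second derivatives. -/
def Cb2 (d : ℕ) (W : Euc d → ℝ) : Prop :=
  ContDiff ℝ 2 W ∧
    ∃ M : ℝ, ∀ x, |W x| ≤ M ∧ ‖fderiv ℝ W x‖ ≤ M ∧ ‖fderiv ℝ (fderiv ℝ W) x‖ ≤ M

/-- Condition (A1):
`limsup_{r→∞} [ r^{d+α-1} sup_{|x|≥r-1} |∇e^{-V}(x)| + r^{d+α-2} sup_{|x|≥r-1} e^{-V(x)} ] = 0`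
(the bracket is nonnegative, so this is the same as convergence to `0`). -/
def condA1 (d : ℕ) (α : ℝ) (V : Euc d → ℝ) : Prop :=
  Filter.Tendsto
    (fun r : ℝ =>
      r ^ ((d : ℝ) + α - 1) *
          sSup ((fun x => ‖fderiv ℝ (fun y => Real.exp (-V y)) x‖) '' {x : Euc d | r - 1 ≤ ‖x‖}) +
        r ^ ((d : ℝ) + α - 2) *
          sSup ((fun x => Real.exp (-V x)) '' {x : Euc d | r - 1 ≤ ‖x‖}))
    Filter.atTop (nhds 0)

/-- Theorem 1.1(1): under `e^{-V} ∈ C_b²`, condition (A1) and `Φ(0) > 0`, the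
Poincaré inequality holds for some constant `C > 0`. -/
theorem stmt0 (d : ℕ) (hd : 1 ≤ d) (α : ℝ) (hα0 : 0 < α) (hα2 : α < 2)
    (V : Euc d → ℝ) (hVm : Measurable V) (hZ0 : 0 < ZV d V) (hZtop : ZV d V < ⊤)
    (hCb : Cb2 d (fun x => Real.exp (-V x))) (hA1 : condA1 d α V)
    (hPhi0 : 0 < PhiV d α V 0) :
    ∃ C : ℝ, 0 < C ∧ poincare d α V C := by
  classical
  set μ := muV d V with hμdef
  set p : ℝ := (d : ℝ) + α with hpdef
  have hp0 : 0 < p := add_pos_of_nonneg_of_pos (Nat.cast_nonneg d) hα0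
  -- pointwise density bound from Φ(0) > 0
  have hkey : ∀ y : Euc d, PhiV d α V 0 * (1 + ‖y‖) ^ p ≤ Real.exp (V y) := by
    intro y
    have hb : BddBelow ((fun x => Real.exp (V x) / (1 + ‖x‖) ^ p) '' {x : Euc d | (0:ℝ) ≤ ‖x‖}) := by
      refine ⟨0, ?_⟩
      rintro v ⟨x, -, rfl⟩
      exact div_nonneg (Real.exp_pos _).le (Real.rpow_nonneg (by positivity) _)
    have hmem : Real.exp (V y) / (1 + ‖y‖) ^ p ∈
        ((fun x => Real.exp (V x) / (1 + ‖x‖) ^ p) '' {x : Euc d | (0:ℝ) ≤ ‖x‖}) :=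
      ⟨y, norm_nonneg y, rfl⟩
    have h1 : PhiV d α V 0 ≤ Real.exp (V y) / (1 + ‖y‖) ^ p := csInf_le hb hmem
    have hpos : (0:ℝ) < (1 + ‖y‖) ^ p :=
      Real.rpow_pos_of_pos (by have := norm_nonneg y; linarith) _
    exact (le_div_iff₀ hpos).mp h1
  -- the constant
  set Φ0 : ℝ := PhiV d α V 0 with hΦ0def
  set c₂ : ℝ := (2:ℝ) ^ p / Φ0 with hc2def
  have hc2pos : 0 < c₂ := div_pos (Real.rpow_pos_of_pos two_pos _) hPhi0
  set K : ℝ≥0∞ := 2 * ((ZV d V)⁻¹ * ENNReal.ofReal c₂) with hKdef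
  have hKne0 : K ≠ 0 := by
    refine mul_ne_zero two_ne_zero (mul_ne_zero ?_ ?_)
    · exact ENNReal.inv_ne_zero.mpr hZtop.ne
    · simpa [ENNReal.ofReal_eq_zero, not_le] using hc2pos
  have hKnetop : K ≠ ⊤ := by
    refine ENNReal.mul_ne_top (by simp) (ENNReal.mul_ne_top ?_ ENNReal.ofReal_ne_top)
    exact ENNReal.inv_ne_top.mpr hZ0.ne'
  -- density
  set h : Euc d → ℝ≥0∞ := fun x => ENNReal.ofReal (Real.exp (-V x)) with hhdef
  have hhm : Measurable h := (Real.measurable_exp.comp hVm.neg).ennreal_ofReal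
  -- μ is a probability measure
  have hμuniv : μ Set.univ = 1 := by
    rw [hμdef, muV, Measure.smul_apply, withDensity_apply _ MeasurableSet.univ,
      Measure.restrict_univ, smul_eq_mul]
    exact ENNReal.inv_mul_cancel hZ0.ne' hZtop.ne
  haveI hprob : IsProbabilityMeasure μ := ⟨hμuniv⟩
  -- volume is absolutely continuous w.r.t. μ
  have hac : (volume : Measure (Euc d)) ≪ μ := by
    have h1 : (volume : Measure (Euc d)) ≪ volume.withDensity h := by
      refine withDensity_absolutelyContinuous' hhm.aemeasurable ?_
      exact Filter.Eventually.of_forall fun x => by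
        simp [hhdef, ENNReal.ofReal_eq_zero, not_le, Real.exp_pos]
    intro s hs
    apply h1
    rw [hμdef, muV, Measure.smul_apply, smul_eq_mul] at hs
    rcases mul_eq_zero.mp hs with h' | h'
    · exact absurd h' (ENNReal.inv_ne_zero.mpr hZtop.ne)
    · exact h'
  refine ⟨K.toReal, ENNReal.toReal_pos hKne0 hKnetop, ?_⟩
  intro f hfD hf0
  obtain ⟨hf2, hfform⟩ := hfD
  rw [ENNReal.ofReal_toReal hKnetop]
  -- measurable representative
  have hfae : AEMeasurable f μ := hf2.aestronglyMeasurable.aemeasurable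
  set g : Euc d → ℝ := hfae.mk f with hgdef
  have hgm : Measurable g := hfae.measurable_mk
  have hfg : f =ᵐ[μ] g := hfae.ae_eq_mk
  have hfgv : f =ᵐ[volume] g := hfg.filter_mono hac.ae_le
  have hg2 : MemLp g 2 μ := hf2.ae_eq hfg
  have hgInt : Integrable g μ := hg2.integrable one_le_two
  have hg0 : (∫ x, g x ∂μ) = 0 := by rw [← integral_congr_ae hfg]; exact hf0
  -- dform f = dform g
  have hdf : dform d α V f = dform d α V g := by
    refine lintegral_congr_ae ?_
    filter_upwards [hfg] with x hx
    refine lintegral_congr_ae ?_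
    filter_upwards [hfgv] with y hy
    rw [hx, hy]
  have hsq : (∫⁻ x, ENNReal.ofReal ((f x) ^ 2) ∂μ) = ∫⁻ x, ENNReal.ofReal ((g x) ^ 2) ∂μ := by
    refine lintegral_congr_ae ?_
    filter_upwards [hfg] with x hx
    rw [hx]
  rw [hsq, hdf]
  -- step A: mean-zero representation
  have hA : ∀ x : Euc d, g x = ∫ y, (g x - g y) ∂μ := by
    intro x
    rw [integral_sub (integrable_const _) hgInt, integral_const, hg0]
    simp
  -- step B : pointwise Cauchy-Schwarz
  have hB : ∀ x : Euc d, ENNReal.ofReal ((g x) ^ 2)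
      ≤ ∫⁻ y, ENNReal.ofReal ((g x - g y) ^ 2) ∂μ := by
    intro x
    have hint : Integrable (fun y => g x - g y) μ := (integrable_const _).sub hgInt
    have h1 : ENNReal.ofReal |g x| ≤ ∫⁻ y, ENNReal.ofReal |g x - g y| ∂μ := by
      calc ENNReal.ofReal |g x| = ENNReal.ofReal |∫ y, (g x - g y) ∂μ| := by rw [← hA x]
        _ ≤ ENNReal.ofReal (∫ y, |g x - g y| ∂μ) := by
            refine ENNReal.ofReal_le_ofReal ?_
            simpa [Real.norm_eq_abs] using norm_integral_le_integral_norm (fun y => g x - g y) (μ := μ)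
        _ = ∫⁻ y, ENNReal.ofReal |g x - g y| ∂μ := by
            exact ofReal_integral_eq_lintegral_ofReal hint.abs
              (Filter.Eventually.of_forall fun y => abs_nonneg _)
    have hCS : (∫⁻ y, ENNReal.ofReal |g x - g y| ∂μ)
        ≤ (∫⁻ y, (ENNReal.ofReal |g x - g y|) ^ (2:ℝ) ∂μ) ^ (1/(2:ℝ)) := by
      have hconj : (2:ℝ).HolderConjugate 2 := ⟨by norm_num, by norm_num, by norm_num⟩
      have haem : AEMeasurable (fun y => ENNReal.ofReal |g x - g y|) μ :=
        (((measurable_const.sub hgm).abs).ennreal_ofReal).aemeasurable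
      have := ENNReal.lintegral_mul_le_Lp_mul_Lq μ hconj haem aemeasurable_const
        (g := fun _ => (1:ℝ≥0∞))
      simpa [measure_univ] using this
    have habs : ∀ a : ℝ, ENNReal.ofReal (a ^ 2) = (ENNReal.ofReal |a|) ^ (2:ℝ) := by
      intro a
      rw [ENNReal.ofReal_rpow_of_nonneg (abs_nonneg _) (by norm_num : (0:ℝ) ≤ 2),
        show (2:ℝ) = ((2:ℕ):ℝ) from by norm_num, Real.rpow_natCast, sq_abs]
    calc ENNReal.ofReal ((g x) ^ 2) = (ENNReal.ofReal |g x|) ^ (2:ℝ) := habs _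
      _ ≤ ((∫⁻ y, (ENNReal.ofReal |g x - g y|) ^ (2:ℝ) ∂μ) ^ (1/(2:ℝ))) ^ (2:ℝ) :=
          ENNReal.rpow_le_rpow (h1.trans hCS) (by norm_num)
      _ = ∫⁻ y, (ENNReal.ofReal |g x - g y|) ^ (2:ℝ) ∂μ := by
          rw [← ENNReal.rpow_mul]; norm_num
      _ = ∫⁻ y, ENNReal.ofReal ((g x - g y) ^ 2) ∂μ := lintegral_congr fun y => (habs _).symm
  -- step C: symmetrization
  set G : Euc d → Euc d → ℝ≥0∞ := fun x y => ENNReal.ofReal ((g x - g y) ^ 2) with hGdef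
  have hGm2 : Measurable (fun q : Euc d × Euc d => G q.1 q.2) :=
    (((hgm.comp measurable_fst).sub (hgm.comp measurable_snd)).pow_const 2).ennreal_ofReal
  have hm1ite : ∀ x : Euc d, Measurable fun y : Euc d => (if ‖x‖ ≤ ‖y‖ then G x y else 0) :=
    fun x => Measurable.ite (measurableSet_le measurable_const measurable_norm)
      (((measurable_const.sub hgm).pow_const 2).ennreal_ofReal) measurable_const
  set J : ℝ≥0∞ := ∫⁻ x, ∫⁻ y, (if ‖x‖ ≤ ‖y‖ then G x y else 0) ∂μ ∂μ with hJdef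
  have hI2J : (∫⁻ x, ∫⁻ y, G x y ∂μ ∂μ) ≤ 2 * J := by
    have hmle : MeasurableSet {q : Euc d × Euc d | ‖q.1‖ ≤ ‖q.2‖} :=
      measurableSet_le measurable_fst.norm measurable_snd.norm
    have hmlt : MeasurableSet {q : Euc d × Euc d | ‖q.2‖ < ‖q.1‖} :=
      measurableSet_lt measurable_snd.norm measurable_fst.norm
    have hm1 : Measurable (fun q : Euc d × Euc d => if ‖q.1‖ ≤ ‖q.2‖ then G q.1 q.2 else 0) :=
      Measurable.ite hmle hGm2 measurable_const
    have hm2 : Measurable (fun q : Euc d × Euc d => if ‖q.2‖ < ‖q.1‖ then G q.1 q.2 else 0) :=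
      Measurable.ite hmlt hGm2 measurable_const
    have hin : ∀ x : Euc d, (∫⁻ y, G x y ∂μ)
        = (∫⁻ y, (if ‖x‖ ≤ ‖y‖ then G x y else 0) ∂μ)
          + ∫⁻ y, (if ‖y‖ < ‖x‖ then G x y else 0) ∂μ := by
      intro x
      rw [← lintegral_add_left (hm1ite x)]
      refine lintegral_congr fun y => ?_
      by_cases hxy : ‖x‖ ≤ ‖y‖
      · simp [hxy, not_lt.mpr hxy]
      · simp [hxy, not_le.mp hxy]
    have hmint1 : Measurable fun x => ∫⁻ y, (if ‖x‖ ≤ ‖y‖ then G x y else 0) ∂μ :=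
      Measurable.lintegral_prod_right (f := fun x y => if ‖x‖ ≤ ‖y‖ then G x y else 0) hm1
    have hswap : (∫⁻ x, ∫⁻ y, (if ‖y‖ < ‖x‖ then G x y else 0) ∂μ ∂μ)
        = ∫⁻ y, ∫⁻ x, (if ‖y‖ < ‖x‖ then G x y else 0) ∂μ ∂μ :=
      lintegral_lintegral_swap hm2.aemeasurable
    have hle2 : (∫⁻ y, ∫⁻ x, (if ‖y‖ < ‖x‖ then G x y else 0) ∂μ ∂μ) ≤ J := by
      rw [hJdef]
      refine lintegral_mono fun a => lintegral_mono fun b => ?_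
      by_cases hab : ‖a‖ < ‖b‖
      · have h1 : ‖a‖ ≤ ‖b‖ := hab.le
        have h2 : G b a = G a b := by simp only [hGdef]; rw [← neg_sub, neg_sq]
        simp [hab, h1, h2]
      · simp [hab]
    calc (∫⁻ x, ∫⁻ y, G x y ∂μ ∂μ)
        = J + ∫⁻ x, ∫⁻ y, (if ‖y‖ < ‖x‖ then G x y else 0) ∂μ ∂μ := by
          rw [hJdef, ← lintegral_add_left hmint1]
          exact lintegral_congr hin
      _ ≤ J + J := add_le_add_right (hswap.trans_le hle2) J
      _ = 2 * J := (two_mul J).symm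
  -- step D: comparison with the Dirichlet form
  have hDin : ∀ x : Euc d, (∫⁻ y, (if ‖x‖ ≤ ‖y‖ then G x y else 0) ∂μ)
      ≤ ((ZV d V)⁻¹ * ENNReal.ofReal c₂) *
        ∫⁻ y, ENNReal.ofReal ((g x - g y) ^ 2 / dist x y ^ p) := by
    intro x
    rw [hμdef]
    simp only [muV]
    rw [lintegral_smul_measure, lintegral_withDensity_eq_lintegral_mul volume hhm (hm1ite x),
      mul_assoc]
    refine mul_le_mul_right ?_ _
    rw [← lintegral_const_mul' _ _ ENNReal.ofReal_ne_top]
    refine lintegral_mono fun y => ?_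
    show h y * (if ‖x‖ ≤ ‖y‖ then G x y else 0)
        ≤ ENNReal.ofReal c₂ * ENNReal.ofReal ((g x - g y) ^ 2 / dist x y ^ p)
    by_cases hxy : ‖x‖ ≤ ‖y‖
    · rw [if_pos hxy]
      have hr : Real.exp (-V y) * (g x - g y) ^ 2
          ≤ c₂ * ((g x - g y) ^ 2 / dist x y ^ p) := by
        by_cases heq : x = y
        · subst heq; simp
        · have hD0 : (0:ℝ) < dist x y ^ p := Real.rpow_pos_of_pos (dist_pos.mpr heq) _
          have hdle : dist x y ≤ 2 * (1 + ‖y‖) := by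
            rw [dist_eq_norm]
            have h1 : ‖x - y‖ ≤ ‖x‖ + ‖y‖ := norm_sub_le _ _
            linarith [norm_nonneg x, norm_nonneg y]
          have hDle : dist x y ^ p ≤ (2:ℝ) ^ p * (1 + ‖y‖) ^ p := by
            rw [← Real.mul_rpow (by norm_num) (by positivity)]
            exact Real.rpow_le_rpow dist_nonneg hdle hp0.le
          have h2 : Real.exp (-V y) * (1 + ‖y‖) ^ p ≤ 1 / Φ0 := by
            rw [Real.exp_neg, inv_mul_le_iff₀ (Real.exp_pos _), mul_one_div,
              le_div_iff₀ hPhi0, mul_comm]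
            exact hkey y
          have hED : Real.exp (-V y) * dist x y ^ p ≤ c₂ := by
            calc Real.exp (-V y) * dist x y ^ p
                ≤ Real.exp (-V y) * ((2:ℝ) ^ p * (1 + ‖y‖) ^ p) :=
                  mul_le_mul_of_nonneg_left hDle (Real.exp_pos _).le
              _ = (2:ℝ) ^ p * (Real.exp (-V y) * (1 + ‖y‖) ^ p) := by ring
              _ ≤ (2:ℝ) ^ p * (1 / Φ0) :=
                  mul_le_mul_of_nonneg_left h2 (Real.rpow_nonneg (by norm_num) _)
              _ = c₂ := by rw [hc2def]; ring
          rw [show c₂ * ((g x - g y) ^ 2 / dist x y ^ p)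
              = (g x - g y) ^ 2 * c₂ / dist x y ^ p from by ring, le_div_iff₀ hD0]
          calc Real.exp (-V y) * (g x - g y) ^ 2 * dist x y ^ p
              = (g x - g y) ^ 2 * (Real.exp (-V y) * dist x y ^ p) := by ring
            _ ≤ (g x - g y) ^ 2 * c₂ := mul_le_mul_of_nonneg_left hED (sq_nonneg _)
      calc h y * G x y = ENNReal.ofReal (Real.exp (-V y) * (g x - g y) ^ 2) := by
            simp only [hhdef, hGdef]
            rw [← ENNReal.ofReal_mul (Real.exp_pos _).le]
        _ ≤ ENNReal.ofReal (c₂ * ((g x - g y) ^ 2 / dist x y ^ p)) :=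
            ENNReal.ofReal_le_ofReal hr
        _ = ENNReal.ofReal c₂ * ENNReal.ofReal ((g x - g y) ^ 2 / dist x y ^ p) :=
            ENNReal.ofReal_mul hc2pos.le
    · rw [if_neg hxy, mul_zero]
      exact zero_le
  have hJD : J ≤ ((ZV d V)⁻¹ * ENNReal.ofReal c₂) * dform d α V g := by
    have hform : dform d α V g
        = ∫⁻ x, (∫⁻ y, ENNReal.ofReal ((g x - g y) ^ 2 / dist x y ^ p)) ∂μ := by
      simp only [dform, ← hpdef, ← hμdef]
    rw [hform, hJdef,
      ← lintegral_const_mul' _ _ (ENNReal.mul_ne_top (ENNReal.inv_ne_top.mpr hZ0.ne')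
        ENNReal.ofReal_ne_top)]
    exact lintegral_mono hDin
  -- combine
  calc (∫⁻ x, ENNReal.ofReal ((g x) ^ 2) ∂μ)
      ≤ ∫⁻ x, ∫⁻ y, G x y ∂μ ∂μ := lintegral_mono hB
    _ ≤ 2 * J := hI2J
    _ ≤ 2 * (((ZV d V)⁻¹ * ENNReal.ofReal c₂) * dform d α V g) := mul_le_mul_right hJD 2
    _ = K * dform d α V g := by rw [hKdef]; ring
end
end

section
/- Let V(x) = (d+ε)/2 · log(1+|x|^2) with ε ∈ (0,α). Then there exists a constant c > 0 such that the weak Poincaré inequality μ_V(f^2) ≤ β̃(r)·E_{α,V}(f,f) + r·‖f‖_∞^2 holds for all r > 0 and all bounded f ∈ D(E_{α,V}) with μ_V(f) = 0, with β̃(r) = c·(1 + r^{-(α-ε)/ε}). Here ‖f‖_∞ denotes the essential supremum of |f|. -/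
open MeasureTheory Real Filter Metric ENNReal

noncomputable section

/-- The weak Poincaré inequality
`μ_V(f²) ≤ β̃(r) E_{α,V}(f,f) + r ‖f‖_∞²` for all `r > 0` and all essentially bounded
`f ∈ D(E_{α,V})` with `μ_V(f) = 0`. -/
def weakPoincare (d : ℕ) (α : ℝ) (V : Euc d → ℝ) (β : ℝ → ℝ) : Prop :=
  ∀ r : ℝ, 0 < r → ∀ f : Euc d → ℝ, inDomain d α V f → eLpNorm f ⊤ (muV d V) < ⊤ →
    (∫ x, f x ∂(muV d V)) = 0 →
    (∫⁻ x, ENNReal.ofReal ((f x) ^ 2) ∂(muV d V)) ≤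
      ENNReal.ofReal (β r) * dform d α V f +
        ENNReal.ofReal r * (eLpNorm f ⊤ (muV d V)) ^ 2

/-- `V(x) = (d+ε)/2 · log(1+|x|²)`. -/
def Vlog (d : ℕ) (ε : ℝ) : Euc d → ℝ := fun x => ((d : ℝ) + ε) / 2 * Real.log (1 + ‖x‖ ^ 2)

namespace WPaux

/-- real inequality: `(1+t²)^{-s/2} ≤ 2^{s/2} (1+t)^{-s}` -/
lemma aux1 {s t : ℝ} (hs : 0 ≤ s) (ht : 0 ≤ t) :
    (1 + t ^ 2) ^ (-(s / 2)) ≤ 2 ^ (s / 2) * (1 + t) ^ (-s) := by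
  have hA : (0:ℝ) < (1 + t) ^ s := Real.rpow_pos_of_pos (by linarith) _
  have hB : (0:ℝ) < (1 + t ^ 2) ^ (s / 2) := Real.rpow_pos_of_pos (by positivity) _
  have h5 : (1 + t) ^ s ≤ 2 ^ (s / 2) * (1 + t ^ 2) ^ (s / 2) := by
    have h1 : ((1 + t) ^ (2:ℕ) : ℝ) ≤ 2 * (1 + t ^ 2) := by nlinarith [sq_nonneg (1 - t)]
    have h2 := Real.rpow_le_rpow (by positivity) h1 (by positivity : (0:ℝ) ≤ s / 2)
    rw [← Real.rpow_natCast (1 + t) 2, ← Real.rpow_mul (by linarith)] at h2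
    have h3 : ((2:ℕ):ℝ) * (s / 2) = s := by push_cast; ring
    rw [h3] at h2
    rwa [Real.mul_rpow (by norm_num) (by positivity)] at h2
  rw [Real.rpow_neg (by positivity : (0:ℝ) ≤ 1 + t ^ 2),
    Real.rpow_neg (by linarith : (0:ℝ) ≤ 1 + t),
    ← one_div, ← div_eq_mul_inv, div_le_div_iff₀ hB hA, one_mul]
  exact h5

lemma aux2 {a b c : ℝ} (ha : 0 < a) (hab : a ≤ b) (hc : c ≤ 0) : b ^ c ≤ a ^ c :=
  Real.rpow_le_rpow_of_nonpos ha hab hc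

/-- the density of `μ_V` as an `ℝ≥0∞`-valued function. -/
def rho (d : ℕ) (ε : ℝ) (x : Euc d) : ℝ≥0∞ :=
  ENNReal.ofReal ((1 + ‖x‖ ^ 2) ^ (-(((d : ℝ) + ε) / 2)))

lemma rho_meas (d : ℕ) (ε : ℝ) : Measurable (rho d ε) := by
  apply Measurable.ennreal_ofReal
  apply Continuous.measurable
  apply Continuous.rpow_const (by continuity)
  intro x
  left
  positivity

lemma rho_eq (d : ℕ) (ε : ℝ) (x : Euc d) :
    ENNReal.ofReal (Real.exp (-(Vlog d ε x))) = rho d ε x := by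
  have hpos : (0:ℝ) < 1 + ‖x‖ ^ 2 := by positivity
  unfold rho Vlog
  rw [Real.rpow_def_of_pos hpos]
  congr 1
  congr 1
  ring

lemma nu_eq (d : ℕ) (ε : ℝ) :
    (volume.withDensity fun x => ENNReal.ofReal (Real.exp (-(Vlog d ε x)))) =
      volume.withDensity (rho d ε) := by
  congr 1
  funext x
  exact rho_eq d ε x

lemma muV_eq (d : ℕ) (ε : ℝ) :
    muV d (Vlog d ε) = (ZV d (Vlog d ε))⁻¹ • (volume.withDensity (rho d ε)) := by
  rw [muV, nu_eq]

lemma Z_eq (d : ℕ) (ε : ℝ) : ZV d (Vlog d ε) = ∫⁻ x, rho d ε x := by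
  unfold ZV
  exact lintegral_congr (rho_eq d ε)

lemma Z_lt_top (d : ℕ) {ε : ℝ} (hε : 0 < ε) : ZV d (Vlog d ε) < ⊤ := by
  rw [Z_eq]
  have bound : ∀ x : Euc d, rho d ε x ≤
      ENNReal.ofReal ((2:ℝ) ^ (((d : ℝ) + ε) / 2)) *
        ENNReal.ofReal ((1 + ‖x‖) ^ (-((d : ℝ) + ε))) := by
    intro x
    rw [← ENNReal.ofReal_mul (by positivity)]
    exact ENNReal.ofReal_le_ofReal (aux1 (by positivity) (norm_nonneg x))
  calc (∫⁻ x, rho d ε x)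
      ≤ ∫⁻ x : Euc d, ENNReal.ofReal ((2:ℝ) ^ (((d : ℝ) + ε) / 2)) *
          ENNReal.ofReal ((1 + ‖x‖) ^ (-((d : ℝ) + ε))) := lintegral_mono bound
    _ = ENNReal.ofReal ((2:ℝ) ^ (((d : ℝ) + ε) / 2)) *
          ∫⁻ x : Euc d, ENNReal.ofReal ((1 + ‖x‖) ^ (-((d : ℝ) + ε))) :=
        lintegral_const_mul' _ _ ENNReal.ofReal_ne_top
    _ < ⊤ := by
        apply ENNReal.mul_lt_top ENNReal.ofReal_lt_top
        apply finite_integral_one_add_norm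
        rw [finrank_euclideanSpace_fin]
        linarith

lemma rho_ball_low (d : ℕ) {ε : ℝ} (hε : 0 < ε) :
    ∀ y ∈ ball (0 : Euc d) 1,
      ENNReal.ofReal ((2:ℝ) ^ (-(((d : ℝ) + ε) / 2))) ≤ rho d ε y := by
  intro y hy
  have hy' : ‖y‖ < 1 := by simpa [mem_ball, dist_zero_right] using hy
  apply ENNReal.ofReal_le_ofReal
  have hd0 : (0:ℝ) ≤ (d:ℝ) := Nat.cast_nonneg d
  apply aux2 (by positivity) _ (by linarith)
  nlinarith [norm_nonneg y]

lemma low_ball (d : ℕ) {ε : ℝ} (hε : 0 < ε) :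
    ENNReal.ofReal ((2:ℝ) ^ (-(((d : ℝ) + ε) / 2))) * volume (ball (0 : Euc d) 1) ≤
      ∫⁻ y in ball (0 : Euc d) 1, rho d ε y := by
  rw [← setLIntegral_const]
  exact lintegral_mono_ae (ae_restrict_of_forall_mem measurableSet_ball (rho_ball_low d hε))

lemma Z_pos (d : ℕ) (hd : 1 ≤ d) {ε : ℝ} (hε : 0 < ε) : ZV d (Vlog d ε) ≠ 0 := by
  haveI : Nontrivial (Euc d) := by
    apply Module.nontrivial_of_finrank_pos (R := ℝ)
    rw [finrank_euclideanSpace_fin]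
    exact hd
  have h1 : (0:ℝ≥0∞) < ENNReal.ofReal ((2:ℝ) ^ (-(((d : ℝ) + ε) / 2))) *
      volume (ball (0 : Euc d) 1) := by
    apply ENNReal.mul_pos
    · exact (ENNReal.ofReal_pos.mpr (by positivity)).ne'
    · exact (measure_ball_pos volume (0 : Euc d) one_pos).ne'
  have h2 := (low_ball d hε).trans (setLIntegral_le_lintegral _ _)
  rw [Z_eq]
  exact (h1.trans_le h2).ne'

lemma isProb (d : ℕ) (hd : 1 ≤ d) {ε : ℝ} (hε : 0 < ε) :
    IsProbabilityMeasure (muV d (Vlog d ε)) := by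
  constructor
  rw [muV_eq]
  rw [Measure.smul_apply, smul_eq_mul, withDensity_apply _ MeasurableSet.univ,
    Measure.restrict_univ, ← Z_eq]
  exact ENNReal.inv_mul_cancel (Z_pos d hd hε) (Z_lt_top d hε).ne

lemma muV_apply (d : ℕ) {ε : ℝ} {s : Set (Euc d)} (hs : MeasurableSet s) :
    muV d (Vlog d ε) s = (ZV d (Vlog d ε))⁻¹ * ∫⁻ y in s, rho d ε y := by
  rw [muV_eq, Measure.smul_apply, smul_eq_mul, withDensity_apply _ hs]

lemma setLIntegral_muV (d : ℕ) {ε : ℝ} {s : Set (Euc d)} (hs : MeasurableSet s)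
    (F : Euc d → ℝ≥0∞) :
    ∫⁻ y in s, F y ∂(muV d (Vlog d ε)) =
      (ZV d (Vlog d ε))⁻¹ * ∫⁻ y in s, rho d ε y * F y := by
  rw [muV_eq, Measure.restrict_smul, lintegral_smul_measure,
    setLIntegral_withDensity_eq_setLIntegral_mul_non_measurable volume (rho_meas d ε) F hs
      (Eventually.of_forall fun _ => ENNReal.ofReal_lt_top)]
  rfl

/-- arithmetic for the tail: `(R·2^j)^{-(d+ε)} (R·2^{j+1})^d = 2^d R^{-ε} (2^{-ε})^j`. -/
lemma aux3 (d j : ℕ) {R ε : ℝ} (hR : 0 < R) :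
    (R * 2 ^ j) ^ (-((d:ℝ) + ε)) * (R * 2 ^ (j + 1)) ^ (d:ℕ) =
      (2:ℝ) ^ (d:ℕ) * R ^ (-ε) * ((2:ℝ) ^ (-ε)) ^ j := by
  have hu : (0:ℝ) < R * 2 ^ j := by positivity
  have h1 : R * (2:ℝ) ^ (j + 1) = 2 * (R * 2 ^ j) := by ring
  rw [h1, mul_pow]
  have h2 : ((R * 2 ^ j : ℝ)) ^ (d:ℕ) = (R * 2 ^ j) ^ ((d:ℕ):ℝ) :=
    (Real.rpow_natCast _ d).symm
  rw [h2]
  rw [mul_comm ((2:ℝ) ^ (d:ℕ)) _, mul_assoc, ← mul_assoc ((R * 2 ^ j) ^ (-((d:ℝ) + ε)))]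
  rw [← Real.rpow_add hu]
  have h3 : -((d:ℝ) + ε) + (d:ℕ) = -ε := by push_cast; ring
  rw [h3]
  rw [Real.mul_rpow hR.le (by positivity : (0:ℝ) ≤ 2 ^ j)]
  have h4 : ((2:ℝ) ^ j) ^ (-ε) = ((2:ℝ) ^ (-ε)) ^ j := by
    rw [← Real.rpow_natCast (2:ℝ) j, ← Real.rpow_mul (by norm_num),
      ← Real.rpow_natCast ((2:ℝ) ^ (-ε)) j, ← Real.rpow_mul (by norm_num)]
    ring_nf
  rw [h4]
  ring

/-- the tail estimate `μ(B_R^c) ≤ K R^{-ε}`. -/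
lemma tail_bound (d : ℕ) (hd : 1 ≤ d) {ε : ℝ} (hε : 0 < ε) {R : ℝ} (hR : 1 ≤ R) :
    muV d (Vlog d ε) ((ball (0 : Euc d) R)ᶜ) ≤
      ((ZV d (Vlog d ε))⁻¹ * volume (ball (0 : Euc d) 1) *
          ENNReal.ofReal ((2:ℝ) ^ (d:ℕ)) * (1 - ENNReal.ofReal ((2:ℝ) ^ (-ε)))⁻¹) *
        ENNReal.ofReal (R ^ (-ε)) := by
  haveI : Nontrivial (Euc d) := by
    apply Module.nontrivial_of_finrank_pos (R := ℝ)
    rw [finrank_euclideanSpace_fin]; exact hd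
  have hR0 : (0:ℝ) < R := by linarith
  set S : ℕ → Set (Euc d) := fun j => {y | R * 2 ^ j ≤ ‖y‖} ∩ ball 0 (R * 2 ^ (j + 1)) with hS
  have hSmeas : ∀ j, MeasurableSet (S j) := fun j =>
    (measurableSet_le measurable_const measurable_norm).inter measurableSet_ball
  have hcover : (ball (0 : Euc d) R)ᶜ ⊆ ⋃ j, S j := by
    intro y hy
    have hy' : R ≤ ‖y‖ := by
      simpa [mem_ball, dist_zero_right, not_lt] using hy
    obtain ⟨n, h1, h2⟩ := exists_nat_pow_near ((one_le_div hR0).mpr hy') one_lt_two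
    refine Set.mem_iUnion.mpr ⟨n, ?_, ?_⟩
    · have := (le_div_iff₀ hR0).mp h1
      simpa [mul_comm] using this
    · rw [mem_ball, dist_zero_right]
      have := (div_lt_iff₀ hR0).mp h2
      linarith [this]
  have hterm : ∀ j, muV d (Vlog d ε) (S j) ≤
      ((ZV d (Vlog d ε))⁻¹ * volume (ball (0 : Euc d) 1) *
        ENNReal.ofReal ((2:ℝ) ^ (d:ℕ)) * ENNReal.ofReal (R ^ (-ε))) *
        ENNReal.ofReal ((2:ℝ) ^ (-ε)) ^ j := by
    intro j
    rw [muV_apply d (hSmeas j)]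
    have hu : (0:ℝ) < R * 2 ^ j := by positivity
    have hrho : ∀ y ∈ S j, rho d ε y ≤ ENNReal.ofReal ((R * 2 ^ j) ^ (-((d:ℝ) + ε))) := by
      intro y hy
      have h1 : R * 2 ^ j ≤ ‖y‖ := hy.1
      have hy0 : (0:ℝ) < ‖y‖ := lt_of_lt_of_le hu h1
      apply ENNReal.ofReal_le_ofReal
      have e1 : (1 + ‖y‖ ^ 2) ^ (-(((d:ℝ) + ε) / 2)) ≤ (‖y‖ ^ 2) ^ (-(((d:ℝ) + ε) / 2)) := by
        apply aux2 (by positivity) (by linarith) _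
        have hd0 : (0:ℝ) ≤ (d:ℝ) := Nat.cast_nonneg d
        linarith
      have e2 : ((‖y‖:ℝ) ^ 2) ^ (-(((d:ℝ) + ε) / 2)) = ‖y‖ ^ (-((d:ℝ) + ε)) := by
        rw [← Real.rpow_natCast ‖y‖ 2, ← Real.rpow_mul (norm_nonneg y)]
        congr 1
        push_cast
        ring
      have e3 : (‖y‖:ℝ) ^ (-((d:ℝ) + ε)) ≤ (R * 2 ^ j) ^ (-((d:ℝ) + ε)) := by
        apply aux2 hu h1 _
        have hd0 : (0:ℝ) ≤ (d:ℝ) := Nat.cast_nonneg d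
        linarith
      calc (1 + ‖y‖ ^ 2) ^ (-(((d:ℝ) + ε) / 2)) ≤ (‖y‖ ^ 2) ^ (-(((d:ℝ) + ε) / 2)) := e1
        _ = ‖y‖ ^ (-((d:ℝ) + ε)) := e2
        _ ≤ (R * 2 ^ j) ^ (-((d:ℝ) + ε)) := e3
    have hmeasure : (∫⁻ y in S j, rho d ε y) ≤
        ENNReal.ofReal ((R * 2 ^ j) ^ (-((d:ℝ) + ε))) *
          (ENNReal.ofReal ((R * 2 ^ (j + 1)) ^ (d:ℕ)) * volume (ball (0 : Euc d) 1)) := by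
      calc (∫⁻ y in S j, rho d ε y)
          ≤ ∫⁻ _ in S j, ENNReal.ofReal ((R * 2 ^ j) ^ (-((d:ℝ) + ε))) :=
            lintegral_mono_ae (ae_restrict_of_forall_mem (hSmeas j) hrho)
        _ = ENNReal.ofReal ((R * 2 ^ j) ^ (-((d:ℝ) + ε))) * volume (S j) :=
            setLIntegral_const _ _
        _ ≤ ENNReal.ofReal ((R * 2 ^ j) ^ (-((d:ℝ) + ε))) *
              volume (ball (0 : Euc d) (R * 2 ^ (j + 1))) := by
            apply mul_le_mul_right
            exact measure_mono Set.inter_subset_right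
        _ = ENNReal.ofReal ((R * 2 ^ j) ^ (-((d:ℝ) + ε))) *
              (ENNReal.ofReal ((R * 2 ^ (j + 1)) ^ (d:ℕ)) * volume (ball (0 : Euc d) 1)) := by
            rw [Measure.addHaar_ball volume (0 : Euc d) (by positivity : (0:ℝ) ≤ R * 2 ^ (j+1)),
              finrank_euclideanSpace_fin]
    have hm2 : ENNReal.ofReal ((R * 2 ^ j) ^ (-((d:ℝ) + ε))) *
          (ENNReal.ofReal ((R * 2 ^ (j + 1)) ^ (d:ℕ)) * volume (ball (0 : Euc d) 1)) =
        (volume (ball (0 : Euc d) 1) * ENNReal.ofReal ((2:ℝ) ^ (d:ℕ)) *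
            ENNReal.ofReal (R ^ (-ε))) * ENNReal.ofReal ((2:ℝ) ^ (-ε)) ^ j := by
      rw [← ENNReal.ofReal_pow (by positivity), ← mul_assoc,
        ← ENNReal.ofReal_mul (by positivity), aux3 d j hR0,
        ENNReal.ofReal_mul (by positivity), ENNReal.ofReal_mul (by positivity)]
      ring
    calc (ZV d (Vlog d ε))⁻¹ * ∫⁻ y in S j, rho d ε y
        ≤ (ZV d (Vlog d ε))⁻¹ *
            ((volume (ball (0 : Euc d) 1) * ENNReal.ofReal ((2:ℝ) ^ (d:ℕ)) *
              ENNReal.ofReal (R ^ (-ε))) * ENNReal.ofReal ((2:ℝ) ^ (-ε)) ^ j) := by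
          rw [← hm2]
          exact mul_le_mul_right hmeasure _
      _ = _ := by ring
  calc muV d (Vlog d ε) ((ball (0 : Euc d) R)ᶜ)
      ≤ muV d (Vlog d ε) (⋃ j, S j) := measure_mono hcover
    _ ≤ ∑' j, muV d (Vlog d ε) (S j) := measure_iUnion_le S
    _ ≤ ∑' j, ((ZV d (Vlog d ε))⁻¹ * volume (ball (0 : Euc d) 1) *
          ENNReal.ofReal ((2:ℝ) ^ (d:ℕ)) * ENNReal.ofReal (R ^ (-ε))) *
          ENNReal.ofReal ((2:ℝ) ^ (-ε)) ^ j := ENNReal.tsum_le_tsum hterm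
    _ = ((ZV d (Vlog d ε))⁻¹ * volume (ball (0 : Euc d) 1) *
          ENNReal.ofReal ((2:ℝ) ^ (d:ℕ)) * ENNReal.ofReal (R ^ (-ε))) *
          (1 - ENNReal.ofReal ((2:ℝ) ^ (-ε)))⁻¹ := by
        rw [ENNReal.tsum_mul_left, ENNReal.tsum_geometric]
    _ = _ := by ring

/-- pointwise kernel domination on the bulk. -/
lemma kernel_bound (d : ℕ) {ε α R : ℝ} (hε : 0 < ε) (hεα : ε < α) (hα : 0 < α)
    (hR : 1 ≤ R) {x y : Euc d} (hx : ‖x‖ < 1) (hy : ‖y‖ < R) (f : Euc d → ℝ) :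
    rho d ε y * ENNReal.ofReal ((f y - f x) ^ 2) ≤
      ENNReal.ofReal ((2:ℝ) ^ (((d:ℝ) + ε) / 2) * (1 + R) ^ (α - ε)) *
        ENNReal.ofReal ((f x - f y) ^ 2 / dist x y ^ ((d : ℝ) + α)) := by
  have hd0 : (0:ℝ) ≤ (d:ℝ) := Nat.cast_nonneg d
  rcases eq_or_ne y x with rfl | hne
  · simp
  · have hD : 0 < dist x y := dist_pos.mpr fun h => hne h.symm
    have hDp : 0 < dist x y ^ ((d : ℝ) + α) := Real.rpow_pos_of_pos hD _
    rw [rho, ← ENNReal.ofReal_mul (by positivity), ← ENNReal.ofReal_mul (by positivity)]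
    apply ENNReal.ofReal_le_ofReal
    have hsq : (f y - f x) ^ 2 = (f x - f y) ^ 2 := by ring
    rw [hsq]
    have key : (1 + ‖y‖ ^ 2) ^ (-(((d:ℝ) + ε) / 2)) * dist x y ^ ((d : ℝ) + α) ≤
        (2:ℝ) ^ (((d:ℝ) + ε) / 2) * (1 + R) ^ (α - ε) := by
      have h1 : dist x y ≤ 1 + ‖y‖ := by
        rw [dist_eq_norm]
        calc ‖x - y‖ ≤ ‖x‖ + ‖y‖ := norm_sub_le x y
          _ ≤ 1 + ‖y‖ := by linarith
      have h2 : dist x y ^ ((d : ℝ) + α) ≤ (1 + ‖y‖) ^ ((d : ℝ) + α) :=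
        Real.rpow_le_rpow dist_nonneg h1 (by linarith)
      have h3 : (1 + ‖y‖ ^ 2) ^ (-(((d:ℝ) + ε) / 2)) ≤
          (2:ℝ) ^ (((d:ℝ) + ε) / 2) * (1 + ‖y‖) ^ (-((d:ℝ) + ε)) :=
        aux1 (by linarith) (norm_nonneg y)
      have hny : (0:ℝ) < 1 + ‖y‖ := by positivity
      calc (1 + ‖y‖ ^ 2) ^ (-(((d:ℝ) + ε) / 2)) * dist x y ^ ((d : ℝ) + α)
          ≤ ((2:ℝ) ^ (((d:ℝ) + ε) / 2) * (1 + ‖y‖) ^ (-((d:ℝ) + ε))) *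
              (1 + ‖y‖) ^ ((d : ℝ) + α) := by
            apply mul_le_mul h3 h2 (Real.rpow_nonneg dist_nonneg _) (by positivity)
        _ = (2:ℝ) ^ (((d:ℝ) + ε) / 2) * (1 + ‖y‖) ^ (α - ε) := by
            rw [mul_assoc, ← Real.rpow_add hny]
            congr 2
            ring
        _ ≤ (2:ℝ) ^ (((d:ℝ) + ε) / 2) * (1 + R) ^ (α - ε) := by
            apply mul_le_mul_of_nonneg_left _ (by positivity)
            exact Real.rpow_le_rpow (by positivity) (by linarith) (by linarith)
    have hrw : (2:ℝ) ^ (((d:ℝ) + ε) / 2) * (1 + R) ^ (α - ε) *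
        ((f x - f y) ^ 2 / dist x y ^ ((d : ℝ) + α)) =
        ((2:ℝ) ^ (((d:ℝ) + ε) / 2) * (1 + R) ^ (α - ε) / dist x y ^ ((d : ℝ) + α)) *
          (f x - f y) ^ 2 := by ring
    rw [hrw]
    apply mul_le_mul_of_nonneg_right _ (sq_nonneg _)
    rw [le_div_iff₀ hDp]
    exact key

/-- mean-zero functions: `∫ f² dμ ≤ ∫ (f - c)² dμ` in lintegral form. -/
lemma meanzero_bound {X : Type*} [MeasurableSpace X] {μ : Measure X}
    [IsProbabilityMeasure μ] {f : X → ℝ} (hf : MemLp f 2 μ)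
    (h0 : ∫ x, f x ∂μ = 0) (c : ℝ) :
    ∫⁻ x, ENNReal.ofReal ((f x) ^ 2) ∂μ ≤ ∫⁻ x, ENNReal.ofReal ((f x - c) ^ 2) ∂μ := by
  have hint : Integrable f μ := MemLp.integrable one_le_two hf
  have hsq : Integrable (fun x => f x ^ 2) μ := hf.integrable_sq
  have hc : MemLp (fun x => f x - c) 2 μ := hf.sub (memLp_const c)
  have hsq2 : Integrable (fun x => (f x - c) ^ 2) μ := hc.integrable_sq
  rw [← ofReal_integral_eq_lintegral_ofReal hsq (Eventually.of_forall fun x => sq_nonneg _),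
    ← ofReal_integral_eq_lintegral_ofReal hsq2 (Eventually.of_forall fun x => sq_nonneg _)]
  apply ENNReal.ofReal_le_ofReal
  have expand : ∫ x, (f x - c) ^ 2 ∂μ = (∫ x, f x ^ 2 ∂μ) - 2 * c * (∫ x, f x ∂μ) + c ^ 2 := by
    have hfun : (fun x => (f x - c) ^ 2) = fun x => (f x ^ 2 - (2 * c) * f x) + c ^ 2 := by
      funext x; ring
    have hint1 : Integrable (fun x => f x ^ 2 - 2 * c * f x) μ := hsq.sub (hint.const_mul (2 * c))
    have hint2 : Integrable (fun _ : X => c ^ 2) μ := integrable_const _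
    rw [hfun, integral_add hint1 hint2, integral_sub hsq (hint.const_mul (2 * c)),
      MeasureTheory.integral_const_mul, integral_const]
    simp [measure_univ]
  rw [expand, h0]
  nlinarith [sq_nonneg c]

lemma ball_pos (d : ℕ) (hd : 1 ≤ d) {ε : ℝ} (hε : 0 < ε) :
    muV d (Vlog d ε) (ball (0 : Euc d) 1) ≠ 0 := by
  haveI : Nontrivial (Euc d) := by
    apply Module.nontrivial_of_finrank_pos (R := ℝ)
    rw [finrank_euclideanSpace_fin]; exact hd
  rw [muV_apply d measurableSet_ball]
  apply mul_ne_zero (ENNReal.inv_ne_zero.mpr (Z_lt_top d hε).ne)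
  have h1 : (0:ℝ≥0∞) < ENNReal.ofReal ((2:ℝ) ^ (-(((d:ℝ) + ε) / 2))) *
      volume (ball (0 : Euc d) 1) :=
    ENNReal.mul_pos (ENNReal.ofReal_pos.mpr (by positivity)).ne'
      (measure_ball_pos volume _ one_pos).ne'
  exact (h1.trans_le (low_ball d hε)).ne'

end WPaux

/-- Corollary 1.2(3), upper bound: for `V(x) = (d+ε)/2 log(1+|x|²)`, `ε ∈ (0,α)`, the weak
Poincaré inequality holds with `β̃(r) = c (1 + r^{-(α-ε)/ε})`. -/
theorem stmt5 (d : ℕ) (hd : 1 ≤ d) (α : ℝ) (hα0 : 0 < α) (hα2 : α < 2)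
    (ε : ℝ) (hε0 : 0 < ε) (hεα : ε < α) :
    ∃ c : ℝ, 0 < c ∧
      weakPoincare d α (Vlog d ε) (fun r => c * (1 + r ^ (-(α - ε) / ε))) := by
  classical
  haveI hP : IsProbabilityMeasure (muV d (Vlog d ε)) := WPaux.isProb d hd hε0
  have hZ0 : ZV d (Vlog d ε) ≠ 0 := WPaux.Z_pos d hd hε0
  have hZtop : ZV d (Vlog d ε) ≠ ⊤ := (WPaux.Z_lt_top d hε0).ne
  have hb0 : muV d (Vlog d ε) (ball (0 : Euc d) 1) ≠ 0 := WPaux.ball_pos d hd hε0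
  have hbtop : muV d (Vlog d ε) (ball (0 : Euc d) 1) ≠ ⊤ := measure_ne_top _ _
  set θ : ℝ := (α - ε) / ε with hθdef
  have hθ0 : 0 ≤ θ := div_nonneg (by linarith) hε0.le
  set K : ℝ≥0∞ := (ZV d (Vlog d ε))⁻¹ * volume (ball (0 : Euc d) 1) *
      ENNReal.ofReal ((2:ℝ) ^ (d:ℕ)) * (1 - ENNReal.ofReal ((2:ℝ) ^ (-ε)))⁻¹ with hKdef
  have hKtop : K ≠ ⊤ := by
    have hq : ENNReal.ofReal ((2:ℝ) ^ (-ε)) < 1 := by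
      rw [← ENNReal.ofReal_one]
      apply ENNReal.ofReal_lt_ofReal_iff_of_nonneg (Real.rpow_nonneg (by norm_num) _) |>.mpr
      exact Real.rpow_lt_one_of_one_lt_of_neg one_lt_two (by linarith)
    have hsub : (1:ℝ≥0∞) - ENNReal.ofReal ((2:ℝ) ^ (-ε)) ≠ 0 := by
      rw [Ne, tsub_eq_zero_iff_le]
      exact fun h => absurd h (not_le.mpr hq)
    rw [hKdef]
    exact ENNReal.mul_ne_top (ENNReal.mul_ne_top
      (ENNReal.mul_ne_top (ENNReal.inv_ne_top.mpr hZ0) measure_ball_lt_top.ne)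
      ENNReal.ofReal_ne_top) (ENNReal.inv_ne_top.mpr hsub)
  set W : ℝ≥0∞ := (muV d (Vlog d ε) (ball (0 : Euc d) 1))⁻¹ * (ZV d (Vlog d ε))⁻¹ with hWdef
  have hWtop : W ≠ ⊤ :=
    ENNReal.mul_ne_top (ENNReal.inv_ne_top.mpr hb0) (ENNReal.inv_ne_top.mpr hZ0)
  set T : ℝ := max 1 (((muV d (Vlog d ε) (ball (0 : Euc d) 1))⁻¹ * 4 * K).toReal) with hTdef
  have hT1 : (1:ℝ) ≤ T := le_max_left _ _
  have hT0 : (0:ℝ) < T := zero_lt_one.trans_le hT1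
  set a₀ : ℝ := W.toReal * 2 ^ (((d:ℝ) + ε) / 2) * 2 ^ (α - ε) with ha₀def
  refine ⟨max 1 (a₀ * T ^ θ), zero_lt_one.trans_le (le_max_left _ _), ?_⟩
  intro r hr f hdom hbdd hmean
  obtain ⟨hL2, hEfin⟩ := hdom
  dsimp only
  -- choice of the radius R
  set R : ℝ := max 1 ((T / r) ^ (1 / ε)) with hRdef
  have hR1 : (1:ℝ) ≤ R := le_max_left _ _
  have hR0 : (0:ℝ) < R := by linarith
  have hTr0 : 0 < T / r := div_pos hT0 hr
  have hpow : ((T / r) ^ (1 / ε)) ^ ε = T / r := by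
    rw [← Real.rpow_mul hTr0.le, one_div_mul_cancel hε0.ne', Real.rpow_one]
  have claimR : T / r ≤ R ^ ε := by
    rcases le_total ((T / r) ^ (1 / ε)) 1 with hc | hc
    · rw [hRdef, max_eq_left hc, Real.one_rpow]
      calc T / r = ((T / r) ^ (1 / ε)) ^ ε := hpow.symm
        _ ≤ 1 ^ ε := Real.rpow_le_rpow (Real.rpow_nonneg hTr0.le _) hc hε0.le
        _ = 1 := Real.one_rpow ε
    · rw [hRdef, max_eq_right hc, hpow]
  have claim1 : T * R ^ (-ε) ≤ r := by
    have hRε : (0:ℝ) < R ^ ε := Real.rpow_pos_of_pos hR0 ε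
    rw [Real.rpow_neg hR0.le]
    calc T * (R ^ ε)⁻¹ ≤ T * (T / r)⁻¹ := by
          apply mul_le_mul_of_nonneg_left _ hT0.le
          exact inv_anti₀ hTr0 claimR
      _ = r := by field_simp
  have claim2 : R ^ (α - ε) ≤ T ^ θ * (1 + r ^ (-θ)) := by
    have hTθ : (1:ℝ) ≤ T ^ θ := by
      calc (1:ℝ) = 1 ^ θ := (Real.one_rpow θ).symm
        _ ≤ T ^ θ := Real.rpow_le_rpow zero_le_one hT1 hθ0
    have hrθ : (0:ℝ) ≤ r ^ (-θ) := Real.rpow_nonneg hr.le _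
    rcases le_total ((T / r) ^ (1 / ε)) 1 with hc | hc
    · rw [hRdef, max_eq_left hc, Real.one_rpow]
      nlinarith
    · rw [hRdef, max_eq_right hc, ← Real.rpow_mul hTr0.le]
      have hexp : 1 / ε * (α - ε) = θ := by rw [hθdef]; ring
      rw [hexp, Real.div_rpow hT0.le hr.le, Real.rpow_neg hr.le, div_eq_mul_inv]
      have h1 : (0:ℝ) ≤ (r ^ θ)⁻¹ := by positivity
      nlinarith [Real.rpow_nonneg hT0.le θ]
  -- the main analytic chain
  set Cs : ℝ := (2:ℝ) ^ (((d:ℝ) + ε) / 2) * (1 + R) ^ (α - ε) with hCs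
  have stepA : ∀ x : Euc d,
      (∫⁻ t, ENNReal.ofReal ((f t) ^ 2) ∂(muV d (Vlog d ε))) ≤
        ∫⁻ y, ENNReal.ofReal ((f y - f x) ^ 2) ∂(muV d (Vlog d ε)) :=
    fun x => WPaux.meanzero_bound hL2 hmean (f x)
  have stepB : muV d (Vlog d ε) (ball (0 : Euc d) 1) *
        (∫⁻ t, ENNReal.ofReal ((f t) ^ 2) ∂(muV d (Vlog d ε))) ≤
      ∫⁻ x in ball (0 : Euc d) 1,
        (∫⁻ y, ENNReal.ofReal ((f y - f x) ^ 2) ∂(muV d (Vlog d ε))) ∂(muV d (Vlog d ε)) := by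
    rw [mul_comm, ← setLIntegral_const]
    exact lintegral_mono fun x => stepA x
  have hA : ∀ x ∈ ball (0 : Euc d) 1,
      (∫⁻ y in ball (0 : Euc d) R, ENNReal.ofReal ((f y - f x) ^ 2) ∂(muV d (Vlog d ε))) ≤
        (ZV d (Vlog d ε))⁻¹ * (ENNReal.ofReal Cs *
          ∫⁻ y, ENNReal.ofReal ((f x - f y) ^ 2 / dist x y ^ ((d : ℝ) + α))) := by
    intro x hx
    have hx' : ‖x‖ < 1 := by simpa [mem_ball, dist_zero_right] using hx
    rw [WPaux.setLIntegral_muV d measurableSet_ball]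
    apply mul_le_mul_right
    calc (∫⁻ y in ball (0 : Euc d) R, WPaux.rho d ε y * ENNReal.ofReal ((f y - f x) ^ 2))
        ≤ ∫⁻ y in ball (0 : Euc d) R, ENNReal.ofReal Cs *
            ENNReal.ofReal ((f x - f y) ^ 2 / dist x y ^ ((d : ℝ) + α)) := by
          apply lintegral_mono_ae
          apply ae_restrict_of_forall_mem measurableSet_ball
          intro y hy
          have hy' : ‖y‖ < R := by simpa [mem_ball, dist_zero_right] using hy
          exact WPaux.kernel_bound d hε0 hεα hα0 hR1 hx' hy' f
      _ = ENNReal.ofReal Cs * ∫⁻ y in ball (0 : Euc d) R,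
            ENNReal.ofReal ((f x - f y) ^ 2 / dist x y ^ ((d : ℝ) + α)) :=
          lintegral_const_mul' _ _ ENNReal.ofReal_ne_top
      _ ≤ _ := mul_le_mul_right (setLIntegral_le_lintegral _ _) _
  have hMae : ∀ᵐ t ∂(muV d (Vlog d ε)),
      (‖f t‖₊ : ℝ≥0∞) ≤ eLpNorm f ⊤ (muV d (Vlog d ε)) := by
    rw [eLpNorm_exponent_top]
    exact enorm_ae_le_eLpNormEssSup f _
  have hB : ∀ᵐ x ∂(muV d (Vlog d ε)),
      (∫⁻ y in (ball (0 : Euc d) R)ᶜ, ENNReal.ofReal ((f y - f x) ^ 2) ∂(muV d (Vlog d ε))) ≤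
        4 * (eLpNorm f ⊤ (muV d (Vlog d ε))) ^ 2 * (K * ENNReal.ofReal (R ^ (-ε))) := by
    filter_upwards [hMae] with x hxM
    calc (∫⁻ y in (ball (0 : Euc d) R)ᶜ, ENNReal.ofReal ((f y - f x) ^ 2) ∂(muV d (Vlog d ε)))
        ≤ ∫⁻ _ in (ball (0 : Euc d) R)ᶜ,
            4 * (eLpNorm f ⊤ (muV d (Vlog d ε))) ^ 2 ∂(muV d (Vlog d ε)) := by
          apply lintegral_mono_ae
          apply ae_restrict_of_ae
          filter_upwards [hMae] with y hyM
          have h1 : ENNReal.ofReal ((f y - f x) ^ 2) = (ENNReal.ofReal |f y - f x|) ^ 2 := by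
            rw [← ENNReal.ofReal_pow (abs_nonneg _), sq_abs]
          rw [h1, ← Real.enorm_eq_ofReal_abs]
          calc ((‖f y - f x‖₊ : ℝ≥0∞)) ^ 2
              ≤ ((‖f y‖₊ : ℝ≥0∞) + (‖f x‖₊ : ℝ≥0∞)) ^ 2 := by
                apply pow_le_pow_left' _ 2
                exact_mod_cast nnnorm_sub_le (f y) (f x)
            _ ≤ (eLpNorm f ⊤ (muV d (Vlog d ε)) + eLpNorm f ⊤ (muV d (Vlog d ε))) ^ 2 :=
                pow_le_pow_left' (add_le_add hyM hxM) 2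
            _ = 4 * (eLpNorm f ⊤ (muV d (Vlog d ε))) ^ 2 := by ring
      _ = 4 * (eLpNorm f ⊤ (muV d (Vlog d ε))) ^ 2 *
            muV d (Vlog d ε) ((ball (0 : Euc d) R)ᶜ) := setLIntegral_const _ _
      _ ≤ _ := by
          apply mul_le_mul_right
          rw [hKdef]
          exact WPaux.tail_bound d hd hε0 hR1
  have step2 : (∫⁻ x in ball (0 : Euc d) 1,
        (∫⁻ y, ENNReal.ofReal ((f y - f x) ^ 2) ∂(muV d (Vlog d ε))) ∂(muV d (Vlog d ε))) ≤
      (ZV d (Vlog d ε))⁻¹ * ENNReal.ofReal Cs * dform d α (Vlog d ε) f +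
        4 * (eLpNorm f ⊤ (muV d (Vlog d ε))) ^ 2 * (K * ENNReal.ofReal (R ^ (-ε))) := by
    have hsplit : ∀ x : Euc d,
        (∫⁻ y, ENNReal.ofReal ((f y - f x) ^ 2) ∂(muV d (Vlog d ε))) =
          (∫⁻ y in ball (0 : Euc d) R, ENNReal.ofReal ((f y - f x) ^ 2) ∂(muV d (Vlog d ε))) +
            (∫⁻ y in (ball (0 : Euc d) R)ᶜ,
              ENNReal.ofReal ((f y - f x) ^ 2) ∂(muV d (Vlog d ε))) :=
      fun x => (lintegral_add_compl _ measurableSet_ball).symm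
    calc (∫⁻ x in ball (0 : Euc d) 1,
          (∫⁻ y, ENNReal.ofReal ((f y - f x) ^ 2) ∂(muV d (Vlog d ε))) ∂(muV d (Vlog d ε)))
        ≤ ∫⁻ x in ball (0 : Euc d) 1,
            ((ZV d (Vlog d ε))⁻¹ * (ENNReal.ofReal Cs *
              ∫⁻ y, ENNReal.ofReal ((f x - f y) ^ 2 / dist x y ^ ((d : ℝ) + α))) +
              4 * (eLpNorm f ⊤ (muV d (Vlog d ε))) ^ 2 * (K * ENNReal.ofReal (R ^ (-ε))))
            ∂(muV d (Vlog d ε)) := by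
          apply lintegral_mono_ae
          filter_upwards [ae_restrict_mem measurableSet_ball, ae_restrict_of_ae hB]
            with x hmem hBx
          rw [hsplit x]
          exact add_le_add (hA x hmem) hBx
      _ = (∫⁻ x in ball (0 : Euc d) 1, (ZV d (Vlog d ε))⁻¹ * (ENNReal.ofReal Cs *
              ∫⁻ y, ENNReal.ofReal ((f x - f y) ^ 2 / dist x y ^ ((d : ℝ) + α)))
            ∂(muV d (Vlog d ε))) +
            (4 * (eLpNorm f ⊤ (muV d (Vlog d ε))) ^ 2 * (K * ENNReal.ofReal (R ^ (-ε)))) *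
              muV d (Vlog d ε) (ball (0 : Euc d) 1) := by
          rw [lintegral_add_right _ measurable_const, setLIntegral_const]
      _ ≤ (ZV d (Vlog d ε))⁻¹ * ENNReal.ofReal Cs * dform d α (Vlog d ε) f +
            4 * (eLpNorm f ⊤ (muV d (Vlog d ε))) ^ 2 * (K * ENNReal.ofReal (R ^ (-ε))) := by
          apply add_le_add
          · have e1 : ∀ x : Euc d, (ZV d (Vlog d ε))⁻¹ * (ENNReal.ofReal Cs *
                ∫⁻ y, ENNReal.ofReal ((f x - f y) ^ 2 / dist x y ^ ((d : ℝ) + α))) =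
                ((ZV d (Vlog d ε))⁻¹ * ENNReal.ofReal Cs) *
                  ∫⁻ y, ENNReal.ofReal ((f x - f y) ^ 2 / dist x y ^ ((d : ℝ) + α)) :=
              fun x => by ring
            rw [lintegral_congr e1, lintegral_const_mul' _ _
              (ENNReal.mul_ne_top (ENNReal.inv_ne_top.mpr hZ0) ENNReal.ofReal_ne_top)]
            apply mul_le_mul_right
            exact (setLIntegral_le_lintegral _ _).trans (le_of_eq rfl)
          · calc 4 * (eLpNorm f ⊤ (muV d (Vlog d ε))) ^ 2 *
                  (K * ENNReal.ofReal (R ^ (-ε))) * muV d (Vlog d ε) (ball (0 : Euc d) 1)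
                ≤ 4 * (eLpNorm f ⊤ (muV d (Vlog d ε))) ^ 2 *
                  (K * ENNReal.ofReal (R ^ (-ε))) * 1 := mul_le_mul_right prob_le_one _
              _ = _ := mul_one _
  have hbP := stepB.trans step2
  have stepP : (∫⁻ t, ENNReal.ofReal ((f t) ^ 2) ∂(muV d (Vlog d ε))) ≤
      (muV d (Vlog d ε) (ball (0 : Euc d) 1))⁻¹ *
        ((ZV d (Vlog d ε))⁻¹ * ENNReal.ofReal Cs * dform d α (Vlog d ε) f) +
      (muV d (Vlog d ε) (ball (0 : Euc d) 1))⁻¹ *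
        (4 * (eLpNorm f ⊤ (muV d (Vlog d ε))) ^ 2 * (K * ENNReal.ofReal (R ^ (-ε)))) := by
    have h1 : (∫⁻ t, ENNReal.ofReal ((f t) ^ 2) ∂(muV d (Vlog d ε))) =
        (muV d (Vlog d ε) (ball (0 : Euc d) 1))⁻¹ *
          (muV d (Vlog d ε) (ball (0 : Euc d) 1) *
            (∫⁻ t, ENNReal.ofReal ((f t) ^ 2) ∂(muV d (Vlog d ε)))) := by
      rw [← mul_assoc, ENNReal.inv_mul_cancel hb0 hbtop, one_mul]
    rw [h1, ← mul_add]
    exact mul_le_mul_right hbP _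
  have hcoef1 : (muV d (Vlog d ε) (ball (0 : Euc d) 1))⁻¹ *
      ((ZV d (Vlog d ε))⁻¹ * ENNReal.ofReal Cs) ≤
      ENNReal.ofReal ((max 1 (a₀ * T ^ θ)) * (1 + r ^ (-(α - ε) / ε))) := by
    have hreal : W.toReal * Cs ≤ (max 1 (a₀ * T ^ θ)) * (1 + r ^ (-θ)) := by
      have hc1 : (1 + R) ^ (α - ε) ≤ 2 ^ (α - ε) * R ^ (α - ε) := by
        rw [← Real.mul_rpow (by norm_num) hR0.le]
        exact Real.rpow_le_rpow (by positivity) (by linarith) (by linarith)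
      have hW0 : (0:ℝ) ≤ W.toReal := ENNReal.toReal_nonneg
      have hrθ : (0:ℝ) ≤ r ^ (-θ) := Real.rpow_nonneg hr.le _
      calc W.toReal * Cs = W.toReal * ((2:ℝ) ^ (((d:ℝ) + ε) / 2) * (1 + R) ^ (α - ε)) := by
            rw [hCs]
        _ ≤ W.toReal * ((2:ℝ) ^ (((d:ℝ) + ε) / 2) *
              (2 ^ (α - ε) * (T ^ θ * (1 + r ^ (-θ))))) := by
            apply mul_le_mul_of_nonneg_left _ hW0
            apply mul_le_mul_of_nonneg_left _ (by positivity)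
            calc (1 + R) ^ (α - ε) ≤ 2 ^ (α - ε) * R ^ (α - ε) := hc1
              _ ≤ 2 ^ (α - ε) * (T ^ θ * (1 + r ^ (-θ))) :=
                mul_le_mul_of_nonneg_left claim2 (by positivity)
        _ = (a₀ * T ^ θ) * (1 + r ^ (-θ)) := by rw [ha₀def]; ring
        _ ≤ (max 1 (a₀ * T ^ θ)) * (1 + r ^ (-θ)) :=
            mul_le_mul_of_nonneg_right (le_max_right _ _) (by positivity)
    calc (muV d (Vlog d ε) (ball (0 : Euc d) 1))⁻¹ *
          ((ZV d (Vlog d ε))⁻¹ * ENNReal.ofReal Cs)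
        = W * ENNReal.ofReal Cs := by rw [hWdef]; ring
      _ = ENNReal.ofReal (W.toReal * Cs) := by
          rw [ENNReal.ofReal_mul ENNReal.toReal_nonneg, ENNReal.ofReal_toReal hWtop]
      _ ≤ ENNReal.ofReal ((max 1 (a₀ * T ^ θ)) * (1 + r ^ (-θ))) :=
          ENNReal.ofReal_le_ofReal hreal
      _ = ENNReal.ofReal ((max 1 (a₀ * T ^ θ)) * (1 + r ^ (-(α - ε) / ε))) := by
          rw [neg_div]
  have hcoef2 : (muV d (Vlog d ε) (ball (0 : Euc d) 1))⁻¹ *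
      (4 * (eLpNorm f ⊤ (muV d (Vlog d ε))) ^ 2 * (K * ENNReal.ofReal (R ^ (-ε)))) ≤
      ENNReal.ofReal r * (eLpNorm f ⊤ (muV d (Vlog d ε))) ^ 2 := by
    have e : (muV d (Vlog d ε) (ball (0 : Euc d) 1))⁻¹ *
        (4 * (eLpNorm f ⊤ (muV d (Vlog d ε))) ^ 2 * (K * ENNReal.ofReal (R ^ (-ε)))) =
        (((muV d (Vlog d ε) (ball (0 : Euc d) 1))⁻¹ * 4 * K) * ENNReal.ofReal (R ^ (-ε))) *
          (eLpNorm f ⊤ (muV d (Vlog d ε))) ^ 2 := by ring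
    rw [e]
    apply mul_le_mul_left
    have hfin : (muV d (Vlog d ε) (ball (0 : Euc d) 1))⁻¹ * 4 * K ≠ ⊤ :=
      ENNReal.mul_ne_top (ENNReal.mul_ne_top (ENNReal.inv_ne_top.mpr hb0)
        (by norm_num)) hKtop
    have h4K : (muV d (Vlog d ε) (ball (0 : Euc d) 1))⁻¹ * 4 * K ≤ ENNReal.ofReal T := by
      rw [← ENNReal.ofReal_toReal hfin]
      exact ENNReal.ofReal_le_ofReal (le_max_right _ _)
    calc ((muV d (Vlog d ε) (ball (0 : Euc d) 1))⁻¹ * 4 * K) * ENNReal.ofReal (R ^ (-ε))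
        ≤ ENNReal.ofReal T * ENNReal.ofReal (R ^ (-ε)) := mul_le_mul_left h4K _
      _ = ENNReal.ofReal (T * R ^ (-ε)) := (ENNReal.ofReal_mul hT0.le).symm
      _ ≤ ENNReal.ofReal r := ENNReal.ofReal_le_ofReal claim1
  calc (∫⁻ x, ENNReal.ofReal ((f x) ^ 2) ∂(muV d (Vlog d ε))) ≤ _ := stepP
    _ ≤ ENNReal.ofReal ((max 1 (a₀ * T ^ θ)) * (1 + r ^ (-(α - ε) / ε))) *
          dform d α (Vlog d ε) f +
        ENNReal.ofReal r * (eLpNorm f ⊤ (muV d (Vlog d ε))) ^ 2 := by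
        apply add_le_add
        · have e : (muV d (Vlog d ε) (ball (0 : Euc d) 1))⁻¹ *
              ((ZV d (Vlog d ε))⁻¹ * ENNReal.ofReal Cs * dform d α (Vlog d ε) f) =
              ((muV d (Vlog d ε) (ball (0 : Euc d) 1))⁻¹ *
                ((ZV d (Vlog d ε))⁻¹ * ENNReal.ofReal Cs)) * dform d α (Vlog d ε) f := by
            ring
          rw [e]
          exact mul_le_mul_left hcoef1 _
        · exact hcoef2
end
end
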